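/- Consider the planar ODE system d/dt ‖w‖ = -(1/2)‖w‖ + (1/2)‖w*‖ (sin φ - φ cos φ)/π and dφ/dt = (1/2)(‖w*‖/‖w‖)(φ sin φ)/π with initial conditions 0 < φ(0) < π and ‖w(0)‖ ≠ 0. Then φ(t) is strictly increasing and converges to π as t → ∞, and ‖w(t)‖ converges to ‖w*‖. -/

import Mathlib

open Real Filter

/-- Monotonicity from a pointwise derivative, nonnegative on the interior. -/
lemma monoOn_of_hasDerivAt {f f' : ℝ → ℝ} (hf : ∀ t, HasDerivAt f (f' t) t)
    {s : Set ℝ} (hs : Convex ℝ s) (h : ∀ t ∈ interior s, 0 ≤ f' t) : MonotoneOn f s :=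
  monotoneOn_of_deriv_nonneg hs
    (fun t _ => (hf t).continuousAt.continuousWithinAt)
    (fun t _ => (hf t).differentiableAt.differentiableWithinAt)
    (fun t ht => (hf t).deriv ▸ h t ht)

/-- Antitonicity from a pointwise derivative, nonpositive on the interior. -/
lemma antiOn_of_hasDerivAt {f f' : ℝ → ℝ} (hf : ∀ t, HasDerivAt f (f' t) t)
    {s : Set ℝ} (hs : Convex ℝ s) (h : ∀ t ∈ interior s, f' t ≤ 0) : AntitoneOn f s :=
  antitoneOn_of_deriv_nonpos hs
    (fun t _ => (hf t).continuousAt.continuousWithinAt)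
    (fun t _ => (hf t).differentiableAt.differentiableWithinAt)
    (fun t ht => (hf t).deriv ▸ h t ht)

/-- Global convergence for the magnitude-angle gradient-flow system of a one-layer single
ReLU neuron: `φ(t)` strictly increases to `π` and `‖w(t)‖` converges to `‖w*‖ = a`. -/
theorem one_layer_global_convergence
    (a : ℝ) (ha : 0 < a) (W φ : ℝ → ℝ)
    (hWpos : ∀ t, 0 < W t)
    (hφrange : ∀ t, 0 < φ t ∧ φ t ≤ π)
    (hW : ∀ t, HasDerivAt W
      (-(1/2) * W t + (1/2) * a * (Real.sin (φ t) - φ t * Real.cos (φ t)) / π) t)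
    (hφ : ∀ t, HasDerivAt φ ((1/2) * (a / W t) * (φ t * Real.sin (φ t)) / π) t)
    (h0 : 0 < φ 0 ∧ φ 0 < π) (hW0 : W 0 ≠ 0) :
    StrictMono φ ∧ Tendsto φ atTop (nhds π) ∧ Tendsto W atTop (nhds a) := by
  have hπ := Real.pi_pos
  -- derivative of φ is nonnegative
  have hφ'nonneg : ∀ t, 0 ≤ (1/2) * (a / W t) * (φ t * Real.sin (φ t)) / π := by
    intro t
    have h1 : 0 ≤ Real.sin (φ t) :=
      Real.sin_nonneg_of_nonneg_of_le_pi (hφrange t).1.le (hφrange t).2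
    have h2 := (hφrange t).1.le
    have h3 := (hWpos t).le
    positivity
  have hmono : Monotone φ :=
    monotone_of_deriv_nonneg (fun t => (hφ t).differentiableAt)
      (fun t => (hφ t).deriv ▸ hφ'nonneg t)
  have hWcont : Continuous W :=
    continuous_iff_continuousAt.mpr fun t => (hW t).differentiableAt.continuousAt
  -- φ t < π for every t
  have hlt : ∀ t, φ t < π := by
    intro t
    rcases lt_or_eq_of_le (hφrange t).2 with h | h
    · exact h
    exfalso
    rcases le_or_gt t 0 with ht | ht
    · have h1 : φ t ≤ φ 0 := hmono ht
      rw [h] at h1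
      linarith [h0.2]
    · -- backward Grönwall on [0, t]
      have hccont : ContinuousOn (fun s => (1/2) * (a / W s) / π) (Set.Icc 0 t) := by
        apply ContinuousOn.div_const
        exact continuousOn_const.mul
          (continuousOn_const.div hWcont.continuousOn fun s _ => (hWpos s).ne')
      obtain ⟨x₀, hx₀, hmax⟩ := isCompact_Icc.exists_isMaxOn
        (Set.nonempty_Icc.mpr ht.le) hccont
      set K : ℝ := π * ((1/2) * (a / W x₀) / π) with hK
      have hψ : ∀ s, HasDerivAt (fun r => (π - φ r) * Real.exp (K * r))
          ((0 - (1/2) * (a / W s) * (φ s * Real.sin (φ s)) / π) * Real.exp (K * s)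
            + (π - φ s) * (Real.exp (K * s) * (K * 1))) s := fun s =>
        ((hasDerivAt_const s π).sub (hφ s)).mul ((hasDerivAt_id s).const_mul K).exp
      have hψmono : MonotoneOn (fun r => (π - φ r) * Real.exp (K * r)) (Set.Icc 0 t) := by
        apply monoOn_of_hasDerivAt hψ (convex_Icc 0 t)
        intro s hs
        have hs' : s ∈ Set.Icc 0 t := interior_subset hs
        have hsin : Real.sin (φ s) ≤ π - φ s := by
          have := Real.sin_le (x := π - φ s) (by linarith [(hφrange s).2])
          rwa [Real.sin_pi_sub] at this
        have hsin0 : 0 ≤ Real.sin (φ s) :=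
          Real.sin_nonneg_of_nonneg_of_le_pi (hφrange s).1.le (hφrange s).2
        have hstep1 : φ s * Real.sin (φ s) ≤ π * (π - φ s) :=
          mul_le_mul (hφrange s).2 hsin hsin0 hπ.le
        have hcle : (1/2) * (a / W s) / π ≤ (1/2) * (a / W x₀) / π := hmax hs'
        have hc0 : 0 ≤ (1/2) * (a / W s) / π := by
          have := (hWpos s).le; positivity
        have hc0' : 0 ≤ (1/2) * (a / W x₀) / π := le_trans hc0 hcle
        have hφprod0 : 0 ≤ φ s * Real.sin (φ s) :=
          mul_nonneg (hφrange s).1.le hsin0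
        have hstep2 : ((1/2) * (a / W s) / π) * (φ s * Real.sin (φ s))
            ≤ ((1/2) * (a / W x₀) / π) * (π * (π - φ s)) :=
          mul_le_mul hcle hstep1 hφprod0 hc0'
        have hkey : (1/2) * (a / W s) * (φ s * Real.sin (φ s)) / π ≤ (π - φ s) * K := by
          have e1 : (1/2) * (a / W s) * (φ s * Real.sin (φ s)) / π
              = ((1/2) * (a / W s) / π) * (φ s * Real.sin (φ s)) := by ring
          have e2 : (π - φ s) * K = ((1/2) * (a / W x₀) / π) * (π * (π - φ s)) := by
            rw [hK]; ring
          rw [e1, e2]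
          exact hstep2
        have he := Real.exp_pos (K * s)
        nlinarith [mul_le_mul_of_nonneg_right hkey he.le]
      have h1 : (fun r => (π - φ r) * Real.exp (K * r)) 0
          ≤ (fun r => (π - φ r) * Real.exp (K * r)) t :=
        hψmono (Set.left_mem_Icc.mpr ht.le) (Set.right_mem_Icc.mpr ht.le) ht.le
      simp only [h] at h1
      rw [mul_zero, Real.exp_zero, sub_self, zero_mul] at h1
      nlinarith [h0.2]
  -- strict monotonicity
  have hsm : StrictMono φ := by
    apply strictMono_of_deriv_pos
    intro t
    rw [(hφ t).deriv]
    have h1 : 0 < Real.sin (φ t) := Real.sin_pos_of_pos_of_lt_pi (hφrange t).1 (hlt t)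
    have h2 := (hφrange t).1
    have h3 := hWpos t
    positivity
  -- convergence of φ to its sup L
  have hbdd : BddAbove (Set.range φ) := ⟨π, by rintro _ ⟨t, rfl⟩; exact (hlt t).le⟩
  have hLtend : Tendsto φ atTop (nhds (⨆ t, φ t)) := tendsto_atTop_ciSup hmono hbdd
  set L : ℝ := ⨆ t, φ t with hLdef
  have hφleL : ∀ t, φ t ≤ L := fun t => le_ciSup hbdd t
  have hLle : L ≤ π := ciSup_le fun t => (hlt t).le
  have hφ0L : φ 0 ≤ L := hφleL 0
  -- L = π
  have hLeq : L = π := by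
    by_contra hne
    have hLlt : L < π := lt_of_le_of_ne hLle hne
    -- W is bounded above on [0, ∞) by B = W 0 + 2a
    have hq : ∀ s, HasDerivAt (fun r => (W r - 2*a) * Real.exp (r/2))
        ((-(1/2) * W s + (1/2) * a * (Real.sin (φ s) - φ s * Real.cos (φ s)) / π)
          * Real.exp (s/2) + (W s - 2*a) * (Real.exp (s/2) * (1/2))) s := fun s =>
      ((hW s).sub_const (2*a)).mul ((hasDerivAt_id s).div_const 2).exp
    have hqanti : AntitoneOn (fun r => (W r - 2*a) * Real.exp (r/2)) (Set.Ici 0) := by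
      apply antiOn_of_hasDerivAt hq (convex_Ici 0)
      intro s _
      have hG : a * (Real.sin (φ s) - φ s * Real.cos (φ s)) / π ≤ 2*a := by
        rw [div_le_iff₀ hπ]
        have hcos := Real.neg_one_le_cos (φ s)
        have hsin := Real.sin_le_one (φ s)
        have h1 := (hφrange s).1
        have h2 := (hφrange s).2
        nlinarith [Real.pi_gt_three, mul_le_mul_of_nonneg_left hsin ha.le,
          mul_le_mul_of_nonneg_left h2 ha.le,
          mul_nonneg ha.le (mul_nonneg h1.le (by linarith : (0:ℝ) ≤ Real.cos (φ s) + 1))]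
      have heq : (-(1/2) * W s + (1/2) * a * (Real.sin (φ s) - φ s * Real.cos (φ s)) / π)
            * Real.exp (s/2) + (W s - 2*a) * (Real.exp (s/2) * (1/2))
          = Real.exp (s/2) * ((1/2) * (a * (Real.sin (φ s) - φ s * Real.cos (φ s)) / π) - a) := by
        ring
      rw [heq]
      exact mul_nonpos_of_nonneg_of_nonpos (Real.exp_pos _).le (by linarith)
    have hWB : ∀ t, 0 ≤ t → W t ≤ W 0 + 2*a := by
      intro t ht
      have h1 : (W t - 2*a) * Real.exp (t/2) ≤ (W 0 - 2*a) * Real.exp (0/2) :=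
        hqanti (Set.self_mem_Ici) (Set.mem_Ici.mpr ht) ht
      rw [zero_div, Real.exp_zero, mul_one] at h1
      have hexp1 : 1 ≤ Real.exp (t/2) := Real.one_le_exp (by linarith)
      rcases le_or_gt (W t) (2*a) with h | h
      · linarith [(hWpos 0)]
      · nlinarith
    -- minimum of sin on [φ 0, L]
    obtain ⟨x₀, hx₀, hmin⟩ := isCompact_Icc.exists_isMinOn
      (Set.nonempty_Icc.mpr hφ0L) Real.continuous_sin.continuousOn
    have hm : 0 < Real.sin x₀ :=
      Real.sin_pos_of_pos_of_lt_pi (lt_of_lt_of_le h0.1 hx₀.1) (lt_of_le_of_lt hx₀.2 hLlt)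
    set B : ℝ := W 0 + 2*a with hB
    have hBpos : 0 < B := by have := hWpos 0; positivity
    set ε : ℝ := (1/2) * (a / B) * (φ 0 * Real.sin x₀) / π with hε
    have hεpos : 0 < ε := by have := h0.1; positivity
    -- φ grows at least linearly
    have hr : ∀ s, HasDerivAt (fun r => φ r - ε * r)
        ((1/2) * (a / W s) * (φ s * Real.sin (φ s)) / π - ε * 1) s := fun s =>
      (hφ s).sub ((hasDerivAt_id s).const_mul ε)
    have hrmono : MonotoneOn (fun r => φ r - ε * r) (Set.Ici 0) := by
      apply monoOn_of_hasDerivAt hr (convex_Ici 0)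
      intro s hs
      rw [interior_Ici] at hs
      have hs0 : (0:ℝ) ≤ s := (Set.mem_Ioi.mp hs).le
      have hφs0 : φ 0 ≤ φ s := hmono hs0
      have hφsL : φ s ≤ L := hφleL s
      have hsinge : Real.sin x₀ ≤ Real.sin (φ s) := hmin ⟨hφs0, hφsL⟩
      have hWle : W s ≤ B := hWB s hs0
      have key : ε ≤ (1/2) * (a / W s) * (φ s * Real.sin (φ s)) / π := by
        rw [hε]
        gcongr <;> first
          | exact hWpos s
          | exact hWle
          | exact hφs0
          | exact hsinge
          | exact (hφrange s).1.le
          | exact h0.1.le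
          | exact hm.le
          | exact mul_nonneg h0.1.le hm.le
          | exact mul_nonneg (by norm_num) (div_nonneg ha.le (hWpos s).le)
          | positivity
      linarith
    have hgrow : ∀ t, 0 ≤ t → φ 0 + ε * t ≤ φ t := by
      intro t ht
      have h1 : φ 0 - ε * 0 ≤ φ t - ε * t :=
        hrmono Set.self_mem_Ici (Set.mem_Ici.mpr ht) ht
      rw [mul_zero, sub_zero] at h1
      linarith
    have hT : φ 0 + ε * (π / ε) ≤ φ (π / ε) := hgrow _ (by positivity)
    rw [mul_div_cancel₀ _ hεpos.ne'] at hT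
    have := hlt (π / ε)
    linarith [h0.1]
  rw [hLeq] at hLtend
  -- convergence of the driving term to a
  have hgt : Tendsto (fun t => a * (Real.sin (φ t) - φ t * Real.cos (φ t)) / π)
      atTop (nhds a) := by
    have hc : Continuous (fun x : ℝ => a * (Real.sin x - x * Real.cos x) / π) := by
      fun_prop
    have h2 := (hc.tendsto π).comp hLtend
    have h3 : a * (Real.sin π - π * Real.cos π) / π = a := by
      rw [Real.sin_pi, Real.cos_pi]
      field_simp
      ring
    rw [h3] at h2
    exact h2
  -- convergence of W to a
  have hWtend : Tendsto W atTop (nhds a) := by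
    rw [Metric.tendsto_atTop]
    intro ε hε
    obtain ⟨T, hT⟩ := (Metric.tendsto_atTop.mp hgt) (ε/4) (by positivity)
    have hp : ∀ s, HasDerivAt (fun r => (W r - a) * Real.exp (r/2))
        ((-(1/2) * W s + (1/2) * a * (Real.sin (φ s) - φ s * Real.cos (φ s)) / π)
          * Real.exp (s/2) + (W s - a) * (Real.exp (s/2) * (1/2))) s := fun s =>
      ((hW s).sub_const a).mul ((hasDerivAt_id s).div_const 2).exp
    have hgabs : ∀ s, T ≤ s →
        |a * (Real.sin (φ s) - φ s * Real.cos (φ s)) / π - a| < ε/4 := by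
      intro s hs
      have := hT s hs
      rwa [Real.dist_eq] at this
    -- upper comparison
    have hplus : AntitoneOn
        (fun r => (W r - a) * Real.exp (r/2) - (ε/2) * Real.exp (r/2)) (Set.Ici T) := by
      apply antiOn_of_hasDerivAt
        (f' := fun s => ((-(1/2) * W s + (1/2) * a * (Real.sin (φ s) - φ s * Real.cos (φ s)) / π)
          * Real.exp (s/2) + (W s - a) * (Real.exp (s/2) * (1/2))) - (ε/2) * (Real.exp (s/2) * (1/2)))
        (fun s => (hp s).sub (((hasDerivAt_id s).div_const 2).exp.const_mul (ε/2)))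
        (convex_Ici T)
      intro s hs
      rw [interior_Ici] at hs
      have hg := abs_lt.mp (hgabs s (Set.mem_Ioi.mp hs).le)
      have heq : ((-(1/2) * W s + (1/2) * a * (Real.sin (φ s) - φ s * Real.cos (φ s)) / π)
            * Real.exp (s/2) + (W s - a) * (Real.exp (s/2) * (1/2))) - (ε/2) * (Real.exp (s/2) * (1/2))
          = Real.exp (s/2) *
            ((a * (Real.sin (φ s) - φ s * Real.cos (φ s)) / π - a)/2 - ε/4) := by ring
      rw [heq]
      exact mul_nonpos_of_nonneg_of_nonpos (Real.exp_pos _).le (by linarith [hg.2])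
    have hminus : AntitoneOn
        (fun r => -((W r - a) * Real.exp (r/2)) - (ε/2) * Real.exp (r/2)) (Set.Ici T) := by
      apply antiOn_of_hasDerivAt
        (f' := fun s => -((-(1/2) * W s + (1/2) * a * (Real.sin (φ s) - φ s * Real.cos (φ s)) / π)
          * Real.exp (s/2) + (W s - a) * (Real.exp (s/2) * (1/2))) - (ε/2) * (Real.exp (s/2) * (1/2)))
        (fun s => (hp s).neg.sub (((hasDerivAt_id s).div_const 2).exp.const_mul (ε/2)))
        (convex_Ici T)
      intro s hs
      rw [interior_Ici] at hs
      have hg := abs_lt.mp (hgabs s (Set.mem_Ioi.mp hs).le)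
      have heq : -((-(1/2) * W s + (1/2) * a * (Real.sin (φ s) - φ s * Real.cos (φ s)) / π)
            * Real.exp (s/2) + (W s - a) * (Real.exp (s/2) * (1/2))) - (ε/2) * (Real.exp (s/2) * (1/2))
          = Real.exp (s/2) *
            (-((a * (Real.sin (φ s) - φ s * Real.cos (φ s)) / π - a)/2) - ε/4) := by ring
      rw [heq]
      exact mul_nonpos_of_nonneg_of_nonpos (Real.exp_pos _).le (by linarith [hg.1])
    set pT : ℝ := (W T - a) * Real.exp (T/2) with hpT
    set X : ℝ := (|pT| + 1) * 4 / ε with hX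
    have hXpos : 0 < X := by positivity
    refine ⟨max T (2 * Real.log X), fun t ht => ?_⟩
    have hTt : T ≤ t := le_trans (le_max_left _ _) ht
    have hlogt : 2 * Real.log X ≤ t := le_trans (le_max_right _ _) ht
    have hXle : X ≤ Real.exp (t/2) := by
      calc X = Real.exp (Real.log X) := (Real.exp_log hXpos).symm
        _ ≤ Real.exp (t/2) := Real.exp_le_exp.mpr (by linarith)
    have het := Real.exp_pos (t/2)
    have heT := Real.exp_pos (T/2)
    have hcmp1 : (W t - a) * Real.exp (t/2) - (ε/2) * Real.exp (t/2)
        ≤ pT - (ε/2) * Real.exp (T/2) :=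
      hplus Set.self_mem_Ici (Set.mem_Ici.mpr hTt) hTt
    have hcmp2 : -((W t - a) * Real.exp (t/2)) - (ε/2) * Real.exp (t/2)
        ≤ -pT - (ε/2) * Real.exp (T/2) :=
      hminus Set.self_mem_Ici (Set.mem_Ici.mpr hTt) hTt
    have habs1 : |(W t - a) * Real.exp (t/2)| ≤ |pT| + (ε/2) * Real.exp (t/2) := by
      apply abs_le.mpr
      constructor
      · have := neg_abs_le pT
        nlinarith
      · have := le_abs_self pT
        nlinarith
    have habs2 : |W t - a| * Real.exp (t/2) ≤ |pT| + (ε/2) * Real.exp (t/2) := by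
      rwa [abs_mul, abs_of_pos het] at habs1
    have hXbound : |pT| + 1 ≤ Real.exp (t/2) * ε / 4 := by
      rw [hX] at hXle
      rw [div_le_iff₀ hε] at hXle
      linarith
    rw [Real.dist_eq]
    have hfinal : |W t - a| * Real.exp (t/2) < ε * Real.exp (t/2) := by nlinarith
    exact lt_of_mul_lt_mul_right (by linarith [hfinal]) het.le
  exact ⟨hsm, hLtend, hWtend⟩
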